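/- Let K ≥ 2, let ν > 0 be real, let n > 0 be real, and let m₁,…,m_K be nonnegative reals with ∑_{k=1}^K m_k = n. Then ∏_{k=1}^K Γ((ν + m_k)/2) ≤ Γ(ν/2)^{K−1} · Γ((ν + n)/2), with equality if and only if at most one of the m_k is nonzero (i.e. m_k = n for some k and the rest are zero). -/

import Mathlib

open Real Filter Finset Topology

noncomputable def Hfun (n : ℕ) (s : ℝ) : ℝ :=
  s * Real.log n + Real.log (n.factorial) - ∑ j ∈ Finset.range n, Real.log (s + j + 1)

lemma Hfun_eq {n : ℕ} (hn : 1 ≤ n) {s : ℝ} (hs : 0 < s) :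
    Hfun n s = Real.log (Real.GammaSeq s n) + Real.log s := by
  have hpos : ∀ j ∈ Finset.range n, (0:ℝ) < s + j + 1 := by
    intro j _
    have : (0:ℝ) ≤ (j:ℝ) := Nat.cast_nonneg j
    linarith
  have hprodpos : (0:ℝ) < ∏ j ∈ Finset.range n, (s + j + 1) := Finset.prod_pos hpos
  have hnpos : (0:ℝ) < n := by exact_mod_cast hn
  have hfact : (0:ℝ) < (n.factorial : ℝ) := by exact_mod_cast Nat.factorial_pos n
  have h1 : Real.GammaSeq s n = (n:ℝ) ^ s * (n.factorial : ℝ) / (s * ∏ j ∈ Finset.range n, (s + j + 1)) := by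
    rw [Real.GammaSeq]
    congr 1
    rw [Finset.prod_range_succ']
    push_cast
    rw [mul_comm]
    congr 1
    · simp
    · apply Finset.prod_congr rfl; intro j _; ring
  rw [h1, Real.log_div (by positivity) (by positivity), Real.log_mul (by positivity) hfact.ne',
    Real.log_mul hs.ne' hprodpos.ne', Real.log_rpow hnpos,
    Real.log_prod (fun j hj => (hpos j hj).ne')]
  unfold Hfun
  ring

lemma Hfun_tendsto {s : ℝ} (hs : 0 < s) :
    Tendsto (fun n => Hfun n s) atTop (𝓝 (Real.log (Real.Gamma s) + Real.log s)) := by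
  have h1 : Tendsto (fun n => Real.log (Real.GammaSeq s n) + Real.log s) atTop
      (𝓝 (Real.log (Real.Gamma s) + Real.log s)) := by
    exact (((Real.GammaSeq_tendsto_Gamma s).log (Real.Gamma_pos_of_pos hs).ne')).add
      tendsto_const_nhds
  refine h1.congr' ?_
  filter_upwards [eventually_ge_atTop 1] with n hn
  exact (Hfun_eq hn hs).symm

lemma Hfun_convex_ineq (n : ℕ) {x y a b : ℝ} (hx : 0 < x) (hy : 0 < y)
    (ha : 0 < a) (hb : 0 < b) (hab : a + b = 1) :
    Hfun n (a * x + b * y) ≤ a * Hfun n x + b * Hfun n y := by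
  unfold Hfun
  have key : ∀ j ∈ Finset.range n,
      a * Real.log (x + j + 1) + b * Real.log (y + j + 1) ≤
        Real.log (a * x + b * y + j + 1) := by
    intro j _
    have hj : (0:ℝ) ≤ (j:ℝ) := Nat.cast_nonneg j
    have h := strictConcaveOn_log_Ioi.concaveOn.2 (x := x + j + 1) (y := y + j + 1)
      (by simp [Set.mem_Ioi]; linarith) (by simp [Set.mem_Ioi]; linarith) ha.le hb.le hab
    have heq : a • (x + j + 1) + b • (y + j + 1) = a * x + b * y + j + 1 := by
      simp only [smul_eq_mul]; nlinarith [hab]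
    rw [heq] at h
    simpa using h
  have hsum : ∑ j ∈ Finset.range n, (a * Real.log (x + j + 1) + b * Real.log (y + j + 1)) ≤
      ∑ j ∈ Finset.range n, Real.log (a * x + b * y + j + 1) :=
    Finset.sum_le_sum key
  rw [Finset.sum_add_distrib, ← Finset.mul_sum, ← Finset.mul_sum] at hsum
  have hfact : a * Real.log n.factorial + b * Real.log n.factorial = Real.log n.factorial := by
    rw [← add_mul, hab, one_mul]
  have hlogn : (a*x+b*y) * Real.log n = a*(x*Real.log n) + b*(y*Real.log n) := by ring
  linarith

lemma convexOn_logGamma_add_log :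
    ConvexOn ℝ (Set.Ioi (0:ℝ)) (fun s => Real.log (Real.Gamma s) + Real.log s) := by
  refine convexOn_iff_forall_pos.mpr ⟨convex_Ioi _, fun x hx y hy a b ha hb hab => ?_⟩
  simp only [smul_eq_mul]
  have hx' : (0:ℝ) < x := hx
  have hy' : (0:ℝ) < y := hy
  have hz : 0 < a * x + b * y := by positivity
  refine le_of_tendsto_of_tendsto' (Hfun_tendsto hz) ((Hfun_tendsto hx').const_mul a |>.add
    ((Hfun_tendsto hy').const_mul b)) ?_
  intro n
  exact Hfun_convex_ineq n hx' hy' ha hb hab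

lemma strictConvexOn_logGamma : StrictConvexOn ℝ (Set.Ioi (0:ℝ)) (Real.log ∘ Real.Gamma) := by
  have h := convexOn_logGamma_add_log.add_strictConvexOn
    (strictConcaveOn_log_Ioi.neg)
  refine ⟨convex_Ioi _, fun x hx y hy hxy a b ha hb hab => ?_⟩
  have := h.2 hx hy hxy ha hb hab
  simp only [Pi.add_apply, Pi.neg_apply, smul_eq_mul, Function.comp_apply] at this ⊢
  linarith

/-- strict two-variable superadditivity -/
lemma gamma_strict {a x y : ℝ} (ha : 0 < a) (hx : 0 < x) (hy : 0 < y) :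
    Real.Gamma (a + x) * Real.Gamma (a + y) < Real.Gamma a * Real.Gamma (a + x + y) := by
  set f := Real.log ∘ Real.Gamma
  have hxy : 0 < x + y := by linarith
  set lam := y / (x + y) with hlam
  have hl0 : 0 < lam := by positivity
  have hl1 : lam < 1 := by rw [hlam, div_lt_one hxy]; linarith
  have hlam' : lam + (1 - lam) = 1 := by ring
  have hps : a ≠ a + x + y := by intro h; linarith
  have hmem1 : a ∈ Set.Ioi (0:ℝ) := ha
  have hmem2 : a + x + y ∈ Set.Ioi (0:ℝ) := by simp [Set.mem_Ioi]; linarith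
  have h1 : f (lam * a + (1 - lam) * (a + x + y)) < lam * f a + (1 - lam) * f (a + x + y) := by
    have := strictConvexOn_logGamma.2 hmem1 hmem2 hps hl0 (by linarith) hlam'
    simp only [smul_eq_mul] at this
    exact this
  have h2 : f (lam * (a + x + y) + (1 - lam) * a) < lam * f (a + x + y) + (1 - lam) * f a := by
    have := strictConvexOn_logGamma.2 hmem2 hmem1 (Ne.symm hps) hl0 (by linarith) hlam'
    simp only [smul_eq_mul] at this
    exact this
  have e1 : lam * a + (1 - lam) * (a + x + y) = a + x := by
    field_simp [hlam]
    have hl : y / (x + y) * (x + y) = y := div_mul_cancel₀ y hxy.ne'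
    linear_combination (-1) * hl
  have e2 : lam * (a + x + y) + (1 - lam) * a = a + y := by
    field_simp [hlam]
    have hl : y / (x + y) * (x + y) = y := div_mul_cancel₀ y hxy.ne'
    linear_combination hl
  rw [e1] at h1
  rw [e2] at h2
  have hsum : f (a + x) + f (a + y) < f a + f (a + x + y) := by linarith
  have gpos : ∀ t : ℝ, 0 < t → 0 < Real.Gamma t := fun t ht => Real.Gamma_pos_of_pos ht
  have p1 := gpos _ (by linarith : (0:ℝ) < a + x)
  have p2 := gpos _ (by linarith : (0:ℝ) < a + y)
  have p3 := gpos _ ha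
  have p4 := gpos _ (by linarith : (0:ℝ) < a + x + y)
  have : Real.log (Real.Gamma (a+x) * Real.Gamma (a+y)) <
      Real.log (Real.Gamma a * Real.Gamma (a+x+y)) := by
    rw [Real.log_mul p1.ne' p2.ne', Real.log_mul p3.ne' p4.ne']
    exact hsum
  have := Real.exp_lt_exp.mpr this
  rwa [Real.exp_log (by positivity), Real.exp_log (by positivity)] at this

/-- two-variable lemma with equality characterization -/
lemma gamma_two {a x y : ℝ} (ha : 0 < a) (hx : 0 ≤ x) (hy : 0 ≤ y) :
    Real.Gamma (a + x) * Real.Gamma (a + y) ≤ Real.Gamma a * Real.Gamma (a + x + y) ∧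
    (Real.Gamma (a + x) * Real.Gamma (a + y) = Real.Gamma a * Real.Gamma (a + x + y) ↔
      x = 0 ∨ y = 0) := by
  rcases eq_or_lt_of_le hx with h | hx'
  · constructor
    · rw [← h]; ring_nf; exact le_of_eq rfl
    · constructor
      · intro _; exact Or.inl h.symm
      · intro _; rw [← h]; ring_nf
  rcases eq_or_lt_of_le hy with h | hy'
  · constructor
    · rw [← h]; ring_nf; exact le_of_eq rfl
    · constructor
      · intro _; exact Or.inr h.symm
      · intro _; rw [← h]; ring_nf
  have := gamma_strict ha hx' hy'
  refine ⟨this.le, ?_, ?_⟩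
  · intro h; exact absurd h this.ne
  · rintro (h | h)
    · exact absurd h hx'.ne'
    · exact absurd h hy'.ne'

lemma gamma_key {ι : Type*} {a : ℝ} (ha : 0 < a) {s : Finset ι} (hs : s.Nonempty)
    {m : ι → ℝ} (hm : ∀ k ∈ s, 0 ≤ m k) :
    (∏ k ∈ s, Real.Gamma (a + m k)) ≤
      Real.Gamma a ^ (s.card - 1) * Real.Gamma (a + ∑ k ∈ s, m k) ∧
    ((∏ k ∈ s, Real.Gamma (a + m k)) =
        Real.Gamma a ^ (s.card - 1) * Real.Gamma (a + ∑ k ∈ s, m k) ↔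
      ∃ k ∈ s, ∀ l ∈ s, l ≠ k → m l = 0) := by
  induction hs using Finset.Nonempty.cons_induction with
  | singleton i =>
    simp only [Finset.prod_singleton, Finset.sum_singleton, Finset.card_singleton,
      Nat.sub_self, pow_zero, one_mul]
    refine ⟨le_refl _, ?_, ?_⟩
    · intro _
      exact ⟨i, Finset.mem_singleton_self i, fun l hl hne =>
        absurd (Finset.mem_singleton.mp hl) hne⟩
    · intro _; trivial
  | cons i s hi hne ih =>
    have hmi : 0 ≤ m i := hm i (Finset.mem_cons_self i s)
    have hms : ∀ k ∈ s, 0 ≤ m k := fun k hk => hm k (Finset.mem_cons.mpr (Or.inr hk))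
    obtain ⟨ih1, ih2⟩ := ih hms
    set S := ∑ k ∈ s, m k with hS
    have hSnn : 0 ≤ S := Finset.sum_nonneg hms
    obtain ⟨h2, h2iff⟩ := gamma_two ha hmi hSnn
    have gpos : ∀ t : ℝ, 0 < t → 0 < Real.Gamma t := fun t ht => Real.Gamma_pos_of_pos ht
    have pA : 0 < Real.Gamma (a + m i) := gpos _ (by linarith)
    have pGa : 0 < Real.Gamma a := gpos _ ha
    have pS : 0 < Real.Gamma (a + S) := gpos _ (by linarith)
    have pAll : 0 < Real.Gamma (a + (m i + S)) := gpos _ (by linarith)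
    have pγ : 0 < Real.Gamma a ^ (s.card - 1) := pow_pos pGa _
    have hcard : (Finset.cons i s hi).card - 1 = s.card := by
      rw [Finset.card_cons]
      omega
    have hc1 : s.card - 1 + 1 = s.card := Nat.succ_pred_eq_of_pos hne.card_pos
    rw [Finset.prod_cons, Finset.sum_cons, hcard, ← hS]
    set P := ∏ k ∈ s, Real.Gamma (a + m k) with hP
    -- chain
    have step1 : Real.Gamma (a + m i) * P ≤
        Real.Gamma (a + m i) * (Real.Gamma a ^ (s.card - 1) * Real.Gamma (a + S)) :=
      mul_le_mul_of_nonneg_left ih1 pA.le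
    have hmid : Real.Gamma (a + m i) * (Real.Gamma a ^ (s.card - 1) * Real.Gamma (a + S)) =
        Real.Gamma a ^ (s.card - 1) * (Real.Gamma (a + m i) * Real.Gamma (a + S)) := by ring
    have step2 : Real.Gamma a ^ (s.card - 1) * (Real.Gamma (a + m i) * Real.Gamma (a + S)) ≤
        Real.Gamma a ^ (s.card - 1) * (Real.Gamma a * Real.Gamma (a + m i + S)) :=
      mul_le_mul_of_nonneg_left (by
        have : a + m i + S = a + (m i + S) := by ring
        rw [this] at h2 ⊢
        exact h2) pγ.le
    have hpow : Real.Gamma a ^ s.card = Real.Gamma a ^ (s.card - 1) * Real.Gamma a := by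
      rw [← pow_succ, hc1]
    have hrhs : Real.Gamma a ^ (s.card - 1) * (Real.Gamma a * Real.Gamma (a + m i + S)) =
        Real.Gamma a ^ s.card * Real.Gamma (a + (m i + S)) := by
      rw [hpow]; ring
    have hineq : Real.Gamma (a + m i) * P ≤
        Real.Gamma a ^ s.card * Real.Gamma (a + (m i + S)) := by
      calc Real.Gamma (a + m i) * P ≤ _ := step1
        _ = _ := hmid
        _ ≤ _ := step2
        _ = _ := hrhs
    refine ⟨hineq, ?_, ?_⟩
    · -- equality → characterization
      intro heq
      have heq1 : P = Real.Gamma a ^ (s.card - 1) * Real.Gamma (a + S) := by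
        by_contra hne'
        have hlt : P < Real.Gamma a ^ (s.card - 1) * Real.Gamma (a + S) :=
          lt_of_le_of_ne ih1 hne'
        have : Real.Gamma (a + m i) * P <
            Real.Gamma a ^ s.card * Real.Gamma (a + (m i + S)) := by
          calc Real.Gamma (a + m i) * P
              < Real.Gamma (a + m i) * (Real.Gamma a ^ (s.card - 1) * Real.Gamma (a + S)) :=
                (mul_lt_mul_iff_right₀ pA).mpr hlt
            _ = _ := hmid
            _ ≤ _ := step2
            _ = _ := hrhs
        exact absurd heq this.ne
      have heq2 : Real.Gamma (a + m i) * Real.Gamma (a + S) =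
          Real.Gamma a * Real.Gamma (a + m i + S) := by
        by_contra hne'
        have hlt : Real.Gamma (a + m i) * Real.Gamma (a + S) <
            Real.Gamma a * Real.Gamma (a + m i + S) := by
          have : a + m i + S = a + (m i + S) := by ring
          rw [this]
          exact lt_of_le_of_ne (by rw [← this]; rw [this] at h2; rw [← this] at h2; exact h2)
            (by rw [← this] at *; exact hne')
        have : Real.Gamma (a + m i) * P <
            Real.Gamma a ^ s.card * Real.Gamma (a + (m i + S)) := by
          calc Real.Gamma (a + m i) * P ≤ _ := step1
            _ = _ := hmid
            _ < Real.Gamma a ^ (s.card - 1) * (Real.Gamma a * Real.Gamma (a + m i + S)) :=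
                (mul_lt_mul_iff_right₀ pγ).mpr hlt
            _ = _ := hrhs
        exact absurd heq this.ne
      have hcases : m i = 0 ∨ S = 0 := h2iff.mp heq2
      rcases hcases with h0 | h0
      · obtain ⟨k, hk, hk0⟩ := ih2.mp heq1
        refine ⟨k, Finset.mem_cons.mpr (Or.inr hk), fun l hl hlk => ?_⟩
        rcases Finset.mem_cons.mp hl with rfl | hl'
        · exact h0
        · exact hk0 l hl' hlk
      · have hall : ∀ l ∈ s, m l = 0 := by
          intro l hl
          exact (Finset.sum_eq_zero_iff_of_nonneg hms).mp h0 l hl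
        refine ⟨i, Finset.mem_cons_self i s, fun l hl hlk => ?_⟩
        rcases Finset.mem_cons.mp hl with rfl | hl'
        · exact absurd rfl hlk
        · exact hall l hl'
    · -- characterization → equality
      have final : P = Real.Gamma a ^ (s.card - 1) * Real.Gamma (a + S) →
          Real.Gamma (a + m i) * Real.Gamma (a + S) = Real.Gamma a * Real.Gamma (a + m i + S) →
          Real.Gamma (a + m i) * P = Real.Gamma a ^ s.card * Real.Gamma (a + (m i + S)) := by
        intro heq1 heq2
        calc Real.Gamma (a + m i) * P
            = Real.Gamma (a + m i) * (Real.Gamma a ^ (s.card - 1) * Real.Gamma (a + S)) := by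
              rw [heq1]
          _ = Real.Gamma a ^ (s.card - 1) * (Real.Gamma (a + m i) * Real.Gamma (a + S)) := by ring
          _ = Real.Gamma a ^ (s.card - 1) * (Real.Gamma a * Real.Gamma (a + m i + S)) := by
              rw [heq2]
          _ = Real.Gamma a ^ s.card * Real.Gamma (a + (m i + S)) := by rw [hpow]; ring
      rintro ⟨k, hk, hk0⟩
      rcases Finset.mem_cons.mp hk with rfl | hk'
      · -- k = i : all of s is zero
        have hS0 : S = 0 := by
          rw [hS]
          apply Finset.sum_eq_zero
          intro l hl
          exact hk0 l (Finset.mem_cons.mpr (Or.inr hl)) (fun h => hi (h ▸ hl))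
        have heq2 := h2iff.mpr (Or.inr hS0)
        have heq1 : P = Real.Gamma a ^ (s.card - 1) * Real.Gamma (a + S) := by
          apply ih2.mpr
          obtain ⟨j, hj⟩ := hne
          exact ⟨j, hj, fun l hl _ =>
            hk0 l (Finset.mem_cons.mpr (Or.inr hl)) (fun h => hi (h ▸ hl))⟩
        exact final heq1 heq2
      · -- k ∈ s
        have hmi0 : m i = 0 := hk0 i (Finset.mem_cons_self i s) (fun h => hi (h ▸ hk'))
        have heq2 := h2iff.mpr (Or.inl hmi0)
        have heq1 : P = Real.Gamma a ^ (s.card - 1) * Real.Gamma (a + S) :=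
          ih2.mpr ⟨k, hk', fun l hl hlk =>
            hk0 l (Finset.mem_cons.mpr (Or.inr hl)) hlk⟩
        exact final heq1 heq2

/-- For `ν > 0` and nonnegative reals `m₁,…,m_K` with `∑ m_k = n > 0`,
`∏_k Γ((ν+m_k)/2) ≤ Γ(ν/2)^(K-1) Γ((ν+n)/2)`, with equality iff at most one `m_k` is
nonzero. -/
theorem stmt10 (K : ℕ) (hK : 2 ≤ K) (ν : ℝ) (hν : 0 < ν) (n : ℝ) (hn : 0 < n)
    (m : Fin K → ℝ) (hm : ∀ k, 0 ≤ m k) (hsum : ∑ k, m k = n) :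
    (∏ k, Real.Gamma ((ν + m k) / 2)) ≤
      Real.Gamma (ν / 2) ^ (K - 1) * Real.Gamma ((ν + n) / 2) ∧
    ((∏ k, Real.Gamma ((ν + m k) / 2)) =
        Real.Gamma (ν / 2) ^ (K - 1) * Real.Gamma ((ν + n) / 2) ↔
      ∃ k, m k = n ∧ ∀ l, l ≠ k → m l = 0) := by
  have hKpos : 0 < K := by omega
  have huniv : (Finset.univ : Finset (Fin K)).Nonempty := by
    have : Nonempty (Fin K) := ⟨⟨0, hKpos⟩⟩
    exact Finset.univ_nonempty
  have ha : 0 < ν / 2 := by linarith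
  have hm2 : ∀ k ∈ (Finset.univ : Finset (Fin K)), 0 ≤ m k / 2 := fun k _ => by
    have := hm k; linarith
  obtain ⟨h1, h2⟩ := gamma_key ha huniv hm2
  have hsum2 : ∑ k, m k / 2 = n / 2 := by
    rw [← Finset.sum_div, hsum]
  have hcard : (Finset.univ : Finset (Fin K)).card = K := by simp
  have harg : ∀ k, ν / 2 + m k / 2 = (ν + m k) / 2 := fun k => by ring
  have hargn : ν / 2 + n / 2 = (ν + n) / 2 := by ring
  rw [hsum2, hcard, hargn] at h1 h2
  simp_rw [harg] at h1 h2
  refine ⟨h1, h2.trans ?_⟩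
  constructor
  · rintro ⟨k, -, hk⟩
    refine ⟨k, ?_, fun l hl => ?_⟩
    · have : ∑ l, m l = m k := by
        apply Finset.sum_eq_single
        · intro l _ hl
          have := hk l (Finset.mem_univ l) hl
          linarith
        · intro h; exact absurd (Finset.mem_univ k) h
      linarith [hsum, this]
    · have := hk l (Finset.mem_univ l) hl
      linarith
  · rintro ⟨k, -, hk⟩
    exact ⟨k, Finset.mem_univ k, fun l _ hl => by have := hk l hl; linarith⟩
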